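/- Energy lower bound on makespan: let J be a finite nonempty job set with processing times p_j ≥ 0, resource rates c_j ≥ 0, and capacity C > 0, let t ∈ ℝ, and let s : J → ℝ be a cumulative schedule with s_j ≥ t for all j ∈ J. Then the makespan satisfies max_{j∈J} (s_j + p_j) ≥ t + (1/C) Σ_{j∈J} p_j c_j. -/

import Mathlib

/-- `s` is a cumulative schedule of the job set `J` with processing times `p`,
resource consumption rates `c`, and resource capacity `C`: at every time `t`,
the total rate of resource consumption of the jobs running at `t` is at most `C`. -/
def CumulativeSchedule {ι : Type*} (J : Finset ι) (p c : ι → ℝ) (C : ℝ) (s : ι → ℝ) : Prop :=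
  ∀ t : ℝ, ∑ j ∈ J.filter (fun j => s j ≤ t ∧ t < s j + p j), c j ≤ C

open MeasureTheory Set

/-- Energy lower bound on makespan: if all jobs of a nonempty `J` start at time
`≥ t` in a cumulative schedule, then the makespan is at least
`t + (1/C) ∑_{j∈J} p j * c j`. -/
theorem stmt_13 {ι : Type*} (J : Finset ι) (hJ : J.Nonempty) (p c : ι → ℝ) (C : ℝ)
    (hC : 0 < C)
    (hp : ∀ j ∈ J, 0 ≤ p j)
    (hc : ∀ j ∈ J, 0 ≤ c j)
    (t : ℝ) (s : ι → ℝ)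
    (hcum : CumulativeSchedule J p c C s)
    (hs : ∀ j ∈ J, t ≤ s j) :
    t + (1 / C) * ∑ j ∈ J, p j * c j ≤ J.sup' hJ (fun j => s j + p j) := by
  set M := J.sup' hJ (fun j => s j + p j) with hM
  have hMj : ∀ j ∈ J, s j + p j ≤ M := fun j hj => Finset.le_sup' (fun j => s j + p j) hj
  obtain ⟨j0, hj0⟩ := hJ
  have htM : t ≤ M := by
    have := hMj j0 hj0; have := hs j0 hj0; have := hp j0 hj0; linarith
  set f : ℝ → ℝ := fun u =>
    ∑ j ∈ J, Set.indicator (Set.Ico (s j) (s j + p j)) (fun _ => c j) u with hf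
  -- each indicator summand is integrable
  have hint : ∀ j ∈ J,
      IntegrableOn (Set.indicator (Set.Ico (s j) (s j + p j)) (fun _ => c j))
        (Set.Ico t M) := by
    intro j hj
    refine Integrable.integrableOn ?_
    rw [integrable_indicator_iff measurableSet_Ico]
    exact integrableOn_const measure_Ico_lt_top.ne
  have hfint : IntegrableOn f (Set.Ico t M) := integrable_finset_sum _ hint
  -- integral of each summand is p j * c j
  have hintval : ∀ j ∈ J,
      ∫ u in Set.Ico t M, Set.indicator (Set.Ico (s j) (s j + p j)) (fun _ => c j) u
        = p j * c j := by
    intro j hj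
    rw [setIntegral_indicator measurableSet_Ico]
    have hsub : Set.Ico t M ∩ Set.Ico (s j) (s j + p j) = Set.Ico (s j) (s j + p j) := by
      refine Set.inter_eq_self_of_subset_right ?_
      exact Set.Ico_subset_Ico (hs j hj) (hMj j hj)
    rw [hsub, setIntegral_const, Real.volume_real_Ico_of_le (by have := hp j hj; linarith), smul_eq_mul]
    ring
  have hsum : ∫ u in Set.Ico t M, f u = ∑ j ∈ J, p j * c j := by
    rw [hf]
    rw [integral_finset_sum _ hint]
    exact Finset.sum_congr rfl hintval
  -- pointwise bound f u ≤ C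
  have hbound : ∀ u : ℝ, f u ≤ C := by
    intro u
    have : f u = ∑ j ∈ J.filter (fun j => s j ≤ u ∧ u < s j + p j), c j := by
      rw [hf, Finset.sum_filter]
      refine Finset.sum_congr rfl fun j hj => ?_
      by_cases h : s j ≤ u ∧ u < s j + p j
      · simp [Set.indicator_of_mem, Set.mem_Ico, h]
      · simp [Set.indicator_of_notMem, Set.mem_Ico, h]
    rw [this]; exact hcum u
  have hintle : ∫ u in Set.Ico t M, f u ≤ ∫ _u in Set.Ico t M, C := by
    refine setIntegral_mono_on hfint (integrableOn_const measure_Ico_lt_top.ne)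
      measurableSet_Ico fun u _ => hbound u
  have hCint : ∫ _u in Set.Ico t M, C = (M - t) * C := by
    rw [setIntegral_const, Real.volume_real_Ico_of_le htM, smul_eq_mul]
  have key : ∑ j ∈ J, p j * c j ≤ (M - t) * C := by
    rw [← hsum, ← hCint]; exact hintle
  rw [div_mul_eq_mul_div, one_mul]
  have : (∑ j ∈ J, p j * c j) / C ≤ M - t := by
    rw [div_le_iff₀ hC]; linarith [key]
  linarith
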